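/- Let α ∈ ℝ and β ≥ 0, and define U(ξ) := (αE + βA)ξ and Q(ξ) := ½⟨(αE + βA)ξ, ξ⟩ for ξ ∈ ℤ₊ⁿ. Then there exists a constant C₁ < ∞ such that for every ξ ∈ ℤ₊ⁿ with ‖U(ξ)‖ ≥ C₁, Σ_{i=1}^n [ e^{U_i(ξ)} (Q(ξ + eᵢ) − Q(ξ)) + 1_{ξᵢ > 0} (Q(ξ − eᵢ) − Q(ξ)) ] ≥ 0; that is, the expected one-step drift of Q for the embedded jump chain is nonnegative whenever ‖U(ξ)‖ is large. -/

import Mathlib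

open Finset Real Matrix

/-- `U(ξ) = (αE + βA)ξ`, the gradient of `Q`. -/
noncomputable def U {n : ℕ} (G : SimpleGraph (Fin n)) [DecidableRel G.Adj]
    (α β : ℝ) (ξ : Fin n → ℕ) : Fin n → ℝ :=
  (α • (1 : Matrix (Fin n) (Fin n) ℝ) + β • G.adjMatrix ℝ).mulVec fun j => (ξ j : ℝ)

/-- `Q(ξ) = ½⟨(αE + βA)ξ, ξ⟩`. -/
noncomputable def Q {n : ℕ} (G : SimpleGraph (Fin n)) [DecidableRel G.Adj]
    (α β : ℝ) (ξ : Fin n → ℕ) : ℝ :=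
  1 / 2 * ((α • (1 : Matrix (Fin n) (Fin n) ℝ) + β • G.adjMatrix ℝ).mulVec
      (fun j => (ξ j : ℝ)) ⬝ᵥ fun j => (ξ j : ℝ))

lemma quad_diff {n : ℕ} (M : Matrix (Fin n) (Fin n) ℝ) (hM : ∀ i j, M i j = M j i)
    (v : Fin n → ℝ) (i : Fin n) (t : ℝ) :
    M.mulVec (v + Pi.single i t) ⬝ᵥ (v + Pi.single i t)
      = M.mulVec v ⬝ᵥ v + 2 * t * M.mulVec v i + M i i * t ^ 2 := by
  have hs : (M *ᵥ Pi.single i t) ⬝ᵥ v = t * (M *ᵥ v) i := by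
    rw [show M *ᵥ Pi.single i t = fun k => M k i * t from funext fun _ => dotProduct_single _ _ _]
    simp only [dotProduct, Matrix.mulVec, Finset.mul_sum]
    exact Finset.sum_congr rfl fun j _ => by rw [hM j i]; ring
  rw [Matrix.mulVec_add, add_dotProduct, dotProduct_add, dotProduct_add,
    hs, dotProduct_single, show M *ᵥ Pi.single i t = fun k => M k i * t from funext fun _ => dotProduct_single _ _ _]
  simp only [dotProduct_single]
  ring

section facts
variable {n : ℕ} (G : SimpleGraph (Fin n)) [DecidableRel G.Adj] (α β : ℝ)

lemma Msymm : ∀ i j, (α • (1 : Matrix (Fin n) (Fin n) ℝ) + β • G.adjMatrix ℝ) i j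
    = (α • (1 : Matrix (Fin n) (Fin n) ℝ) + β • G.adjMatrix ℝ) j i := by
  intro i j
  simp [Matrix.add_apply, Matrix.smul_apply, Matrix.one_apply, SimpleGraph.adjMatrix_apply,
    G.adj_comm, eq_comm]

lemma Mdiag (i : Fin n) : (α • (1 : Matrix (Fin n) (Fin n) ℝ) + β • G.adjMatrix ℝ) i i = α := by
  simp [Matrix.add_apply, Matrix.smul_apply, Matrix.one_apply]

lemma cast_update_add (ξ : Fin n → ℕ) (i : Fin n) :
    (fun j => ((Function.update ξ i (ξ i + 1)) j : ℝ))
      = (fun j => (ξ j : ℝ)) + Pi.single i 1 := by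
  funext j
  rcases eq_or_ne j i with h | h
  · subst h; simp
  · simp [Function.update_of_ne h, Pi.single_apply, h]

lemma cast_update_sub (ξ : Fin n → ℕ) (i : Fin n) (h : 0 < ξ i) :
    (fun j => ((Function.update ξ i (ξ i - 1)) j : ℝ))
      = (fun j => (ξ j : ℝ)) + Pi.single i (-1) := by
  funext j
  rcases eq_or_ne j i with h' | h'
  · subst h'
    have h1 : 1 ≤ ξ j := h
    simp [Nat.cast_sub h1, sub_eq_add_neg]
  · simp [Function.update_of_ne h', Pi.single_apply, h']

lemma Qplus (ξ : Fin n → ℕ) (i : Fin n) :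
    Q G α β (Function.update ξ i (ξ i + 1)) - Q G α β ξ = U G α β ξ i + α / 2 := by
  unfold Q U
  rw [cast_update_add, quad_diff _ (Msymm G α β) _ i 1, Mdiag]
  ring

lemma Qminus (ξ : Fin n → ℕ) (i : Fin n) (h : 0 < ξ i) :
    Q G α β (Function.update ξ i (ξ i - 1)) - Q G α β ξ = -(U G α β ξ i) + α / 2 := by
  unfold Q U
  rw [cast_update_sub ξ i h, quad_diff _ (Msymm G α β) _ i (-1), Mdiag]
  ring

lemma Unonneg (hβ : 0 ≤ β) (ξ : Fin n → ℕ) (i : Fin n) (h : ξ i = 0) :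
    0 ≤ U G α β ξ i := by
  unfold U
  simp only [Matrix.mulVec, dotProduct, Matrix.add_apply, Matrix.smul_apply,
    Matrix.one_apply, SimpleGraph.adjMatrix_apply, smul_eq_mul]
  apply Finset.sum_nonneg
  intro j _
  rcases eq_or_ne i j with rfl | hne
  · simp [h]
  · simp only [if_neg hne, mul_zero, zero_add]
    positivity
end facts

/-- the threshold constant -/
noncomputable def bigK (c : ℝ) : ℝ :=
  2 * max 4 (2 * |c|) + |c| * Real.exp (max 4 (2 * |c|)) + 1 + 2 * |c|

lemma bigK_nonneg (c : ℝ) : 0 ≤ bigK c := by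
  unfold bigK
  have h1 : (0:ℝ) ≤ max 4 (2 * |c|) := le_trans (by norm_num) (le_max_left _ _)
  have := abs_nonneg c
  have := (Real.exp_pos (max 4 (2 * |c|))).le
  positivity

lemma L1 (c u : ℝ) (hu : 0 ≤ u) :
    2 * u - (2 * max 4 (2 * |c|) + |c| * Real.exp (max 4 (2 * |c|)))
      ≤ Real.exp u * (u + c) := by
  set R := max 4 (2 * |c|) with hR
  rcases le_or_gt R u with h | h
  · have h4 : (4:ℝ) ≤ u := le_trans (le_max_left _ _) h
    have hc2 : 2 * |c| ≤ u := le_trans (le_max_right _ _) h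
    have he : u + 1 ≤ Real.exp u := Real.add_one_le_exp u
    have hcn : -|c| ≤ c := neg_abs_le c
    have hKe : 0 ≤ |c| * Real.exp R := by positivity
    have hR4 : (4:ℝ) ≤ R := le_max_left _ _
    nlinarith [mul_le_mul he (by linarith : u / 2 ≤ u + c) (by linarith) (by linarith),
      mul_nonneg (by linarith : (0:ℝ) ≤ u) (by linarith : (0:ℝ) ≤ u - 4)]
  · have heR : Real.exp u ≤ Real.exp R := Real.exp_le_exp.mpr h.le
    have hcn : -|c| ≤ c := neg_abs_le c
    rcases le_or_gt 0 (u + c) with h' | h'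
    · nlinarith [mul_nonneg (Real.exp_pos u).le h', Real.exp_pos R, abs_nonneg c,
        mul_nonneg (abs_nonneg c) (Real.exp_pos R).le]
    · nlinarith [mul_nonpos_of_nonneg_of_nonpos (by linarith : (0:ℝ) ≤ Real.exp R - Real.exp u) h'.le,
        mul_le_mul_of_nonneg_left (by linarith : -|c| ≤ u + c) (Real.exp_pos R).le]

lemma L2 (c u : ℝ) (hu : u < 0) :
    -u - (1 + 2 * |c|) ≤ Real.exp u * (u + c) + (-u + c) := by
  have h1 : Real.exp u * Real.exp (-u) = 1 := by rw [← Real.exp_add]; simp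
  have h2 : -u + 1 ≤ Real.exp (-u) := Real.add_one_le_exp (-u)
  have h3 : Real.exp u ≤ 1 := Real.exp_le_one_iff.mpr hu.le
  have hp : 0 < Real.exp u := Real.exp_pos u
  have hcn : -|c| ≤ c := neg_abs_le c
  have hue : -1 ≤ Real.exp u * u := by
    nlinarith [mul_le_mul_of_nonneg_left h2 hp.le]
  have hce : -|c| ≤ Real.exp u * c := by
    nlinarith [mul_nonneg (sub_nonneg.mpr h3) (abs_nonneg c),
      mul_nonneg hp.le (by linarith : (0:ℝ) ≤ c + |c|)]
  nlinarith

lemma term_pos (c u : ℝ) : |u| - bigK c ≤ Real.exp u * (u + c) + (-u + c) := by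
  rcases le_or_gt 0 u with h | h
  · rw [abs_of_nonneg h]
    have := L1 c u h
    have hcn : -|c| ≤ c := neg_abs_le c
    have hca : 0 ≤ |c| := abs_nonneg c
    unfold bigK
    linarith
  · rw [abs_of_neg h]
    have := L2 c u h
    have h1 : (0:ℝ) ≤ max 4 (2 * |c|) := le_trans (by norm_num) (le_max_left _ _)
    have h2 : 0 ≤ |c| * Real.exp (max 4 (2 * |c|)) := by positivity
    unfold bigK
    linarith

lemma term_zero (c u : ℝ) (hu : 0 ≤ u) : |u| - bigK c ≤ Real.exp u * (u + c) := by
  rw [abs_of_nonneg hu]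
  have := L1 c u hu
  have hcn : 0 ≤ |c| := abs_nonneg c
  unfold bigK
  linarith

/-- For `β ≥ 0` there is a constant `C₁ < ∞` such that whenever `‖U(ξ)‖ ≥ C₁`, the
expected one-step drift of `Q` for the embedded jump chain is nonnegative:
`Σᵢ [e^{Uᵢ(ξ)}(Q(ξ+eᵢ)−Q(ξ)) + 1_{ξᵢ>0}(Q(ξ−eᵢ)−Q(ξ))] ≥ 0`. -/
theorem stmt13 {n : ℕ} (G : SimpleGraph (Fin n)) [DecidableRel G.Adj]
    (α β : ℝ) (hβ : 0 ≤ β) :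
    ∃ C₁ : ℝ, ∀ ξ : Fin n → ℕ,
      C₁ ≤ Real.sqrt (∑ i, U G α β ξ i ^ 2) →
      0 ≤ ∑ i, (Real.exp (U G α β ξ i)
            * (Q G α β (Function.update ξ i (ξ i + 1)) - Q G α β ξ)
          + (if 0 < ξ i then (1 : ℝ) else 0)
            * (Q G α β (Function.update ξ i (ξ i - 1)) - Q G α β ξ)) := by
  set c := α / 2 with hc
  refine ⟨n * bigK c, fun ξ hξ => ?_⟩
  have hterm : ∀ i, |U G α β ξ i| - bigK c
      ≤ Real.exp (U G α β ξ i)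
            * (Q G α β (Function.update ξ i (ξ i + 1)) - Q G α β ξ)
          + (if 0 < ξ i then (1 : ℝ) else 0)
            * (Q G α β (Function.update ξ i (ξ i - 1)) - Q G α β ξ) := by
    intro i
    rw [Qplus]
    by_cases h : 0 < ξ i
    · rw [if_pos h, Qminus G α β ξ i h, one_mul]
      exact term_pos c _
    · rw [if_neg h, zero_mul, add_zero]
      exact term_zero c _ (Unonneg G α β hβ ξ i (Nat.eq_zero_of_not_pos h))
  have hsum : ∑ i, (|U G α β ξ i| - bigK c)
      ≤ ∑ i, (Real.exp (U G α β ξ i)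
            * (Q G α β (Function.update ξ i (ξ i + 1)) - Q G α β ξ)
          + (if 0 < ξ i then (1 : ℝ) else 0)
            * (Q G α β (Function.update ξ i (ξ i - 1)) - Q G α β ξ)) :=
    Finset.sum_le_sum fun i _ => hterm i
  have hsqrt : Real.sqrt (∑ i, U G α β ξ i ^ 2) ≤ ∑ i, |U G α β ξ i| := by
    have h1 : ∑ i, U G α β ξ i ^ 2 ≤ (∑ i, |U G α β ξ i|) ^ 2 := by
      calc ∑ i, U G α β ξ i ^ 2 = ∑ i, |U G α β ξ i| ^ 2 := by simp [sq_abs]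
        _ ≤ (∑ i, |U G α β ξ i|) ^ 2 :=
          Finset.sum_sq_le_sq_sum_of_nonneg fun i _ => abs_nonneg _
    calc Real.sqrt (∑ i, U G α β ξ i ^ 2) ≤ Real.sqrt ((∑ i, |U G α β ξ i|) ^ 2) :=
          Real.sqrt_le_sqrt h1
      _ = ∑ i, |U G α β ξ i| :=
          Real.sqrt_sq (Finset.sum_nonneg fun i _ => abs_nonneg _)
  have : (n : ℝ) * bigK c ≤ ∑ i, |U G α β ξ i| := le_trans hξ hsqrt
  rw [Finset.sum_sub_distrib, Finset.sum_const, Finset.card_univ, Fintype.card_fin,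
    nsmul_eq_mul] at hsum
  linarith
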